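/- Independence of ε₋ of the chosen perfect matching: let E be a finite set, σ₀, σ₁ permutations of E, and for a perfect matching m set ρ_{m,c} = (I − ς_{m,c})^{-1} (c = 0,1). Then for any two perfect matchings m and m̂, and for all h₁, h₂ in the subgroup H₁ ⊆ ℤ^E generated by differences of perfect matchings, one has h₁ᵀ (ρ_{m,0} − ρ_{m,1}) h₂ = h₁ᵀ (ρ_{m̂,0} − ρ_{m̂,1}) h₂. -/

import Mathlib

open Finset Matrix

variable {E : Type*}

/-- A perfect matching of `(E, σ₀, σ₁)`: a `{0,1}`-valued function on `E` such that every
cycle (orbit) of `σ₀` and every cycle of `σ₁` contains exactly one element with value `1`. -/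
def IsPerfectMatching (σ₀ σ₁ : Equiv.Perm E) (m : E → ℤ) : Prop :=
  (∀ e, m e = 0 ∨ m e = 1) ∧
  (∀ e, ∃! e', σ₀.SameCycle e e' ∧ m e' = 1) ∧
  (∀ e, ∃! e', σ₁.SameCycle e e' ∧ m e' = 1)

/-- The "broken" permutation matrix `ς_{m,σ}`: the matrix of the permutation `σ`
(with `(σ e, e)`-entry `1`) in which every column `e` with `m e = 1` is replaced by zero. -/
def brokenPermMatrix [DecidableEq E] (σ : Equiv.Perm E) (m : E → ℤ) : Matrix E E ℤ :=
  Matrix.of fun e' e => if e' = σ e ∧ m e = 0 then 1 else 0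

/-- The matrix `ρ_{m,σ} = (I - ς_{m,σ})⁻¹`. -/
noncomputable def rhoMatrix [Fintype E] [DecidableEq E] (σ : Equiv.Perm E) (m : E → ℤ) :
    Matrix E E ℤ :=
  (1 - brokenPermMatrix σ m)⁻¹

/-- The subgroup `H₁ ⊆ ℤ^E` generated by all differences of perfect matchings. -/
def matchingHomology (σ₀ σ₁ : Equiv.Perm E) : AddSubgroup (E → ℤ) :=
  AddSubgroup.closure
    {x | ∃ m' m'', IsPerfectMatching σ₀ σ₁ m' ∧ IsPerfectMatching σ₀ σ₁ m'' ∧ x = m' - m''}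

section Aux
variable [Fintype E] [DecidableEq E]

private lemma broken_pow_apply (σ : Equiv.Perm E) (m : E → ℤ) (N : ℕ) (e' e : E) :
    ((brokenPermMatrix σ m) ^ N) e' e =
      if e' = (σ ^ N) e ∧ ∀ j < N, m ((σ ^ j) e) = 0 then 1 else 0 := by
  induction N generalizing e' with
  | zero => simp [Matrix.one_apply]
  | succ N ih =>
    have hkey : ∀ x ∈ Finset.univ, x ≠ (σ ^ N) e →
        brokenPermMatrix σ m e' x * ((brokenPermMatrix σ m) ^ N) x e = 0 := by
      intro x _ hx
      rw [ih]
      simp [hx]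
    rw [pow_succ', Matrix.mul_apply,
      Finset.sum_eq_single_of_mem ((σ ^ N) e) (Finset.mem_univ _) hkey, ih]
    have hσ : (σ ^ (N + 1)) e = σ ((σ ^ N) e) := by rw [pow_succ']; rfl
    have hforall : (∀ j < N + 1, m ((σ ^ j) e) = 0) ↔
        (m ((σ ^ N) e) = 0 ∧ ∀ j < N, m ((σ ^ j) e) = 0) := by
      constructor
      · intro h
        exact ⟨h N (Nat.lt_succ_self N), fun j hj => h j (hj.trans (Nat.lt_succ_self N))⟩
      · rintro ⟨h0, h⟩ j hj
        rcases Nat.lt_succ_iff_lt_or_eq.mp hj with hj | rfl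
        · exact h j hj
        · exact h0
    simp only [brokenPermMatrix, Matrix.of_apply, hσ, hforall]
    by_cases hA : e' = σ ((σ ^ N) e) <;> by_cases hB : m ((σ ^ N) e) = 0 <;>
      by_cases hC : ∀ j < N, m ((σ ^ j) e) = 0 <;> simp [hA, hB, hC]

private lemma broken_pow_orderOf (σ : Equiv.Perm E) (m : E → ℤ)
    (hex : ∀ e, ∃! e', σ.SameCycle e e' ∧ m e' = 1) :
    (brokenPermMatrix σ m) ^ (orderOf σ) = 0 := by
  ext e' e
  rw [broken_pow_apply]
  simp only [Matrix.zero_apply]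
  rw [if_neg]
  rintro ⟨-, hall⟩
  obtain ⟨p, ⟨hp, hp1⟩, -⟩ := hex e
  obtain ⟨i, hi, rfl⟩ := hp.exists_pow_eq'
  rw [hall i hi] at hp1
  exact absurd hp1 (by norm_num)

private lemma rho_spec (σ : Equiv.Perm E) (m : E → ℤ)
    (hex : ∀ e, ∃! e', σ.SameCycle e e' ∧ m e' = 1) :
    (1 - brokenPermMatrix σ m) * rhoMatrix σ m = 1 ∧
      rhoMatrix σ m * (1 - brokenPermMatrix σ m) = 1 := by
  set ς := brokenPermMatrix σ m with hς
  set B : Matrix E E ℤ := ∑ i ∈ Finset.range (orderOf σ), ς ^ i with hB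
  have hnil : ς ^ (orderOf σ) = 0 := broken_pow_orderOf σ m hex
  have hr : B * (ς - 1) = -1 := by
    rw [hB, geom_sum_mul, hnil, zero_sub]
  have hl : (ς - 1) * B = -1 := by
    rw [hB, mul_geom_sum, hnil, zero_sub]
  have hright : B * (1 - ς) = 1 := by
    have : B * (1 - ς) = -(B * (ς - 1)) := by rw [← mul_neg, neg_sub]
    rw [this, hr, neg_neg]
  have hleft : (1 - ς) * B = 1 := by
    have : (1 - ς) * B = -((ς - 1) * B) := by rw [← neg_mul, neg_sub]
    rw [this, hl, neg_neg]
  have hrho : rhoMatrix σ m = B := Matrix.inv_eq_right_inv hleft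
  rw [hrho]
  exact ⟨hleft, hright⟩

private lemma vecMul_broken (σ : Equiv.Perm E) (m : E → ℤ) (w : E → ℤ) (e : E) :
    (w ᵥ* brokenPermMatrix σ m) e = if m e = 0 then w (σ e) else 0 := by
  simp only [Matrix.vecMul, dotProduct, brokenPermMatrix, Matrix.of_apply]
  by_cases hme : m e = 0
  · simp [hme, mul_ite, Finset.sum_ite_eq']
  · simp [hme]

private lemma broken_mulVec (σ : Equiv.Perm E) (m : E → ℤ) (u : E → ℤ) (e : E) :
    (brokenPermMatrix σ m *ᵥ u) e = if m (σ⁻¹ e) = 0 then u (σ⁻¹ e) else 0 := by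
  simp only [Matrix.mulVec, dotProduct, brokenPermMatrix, Matrix.of_apply]
  have hiff : ∀ x : E, (e = σ x) ↔ (x = σ⁻¹ e) := by
    intro x
    constructor
    · rintro rfl; simp
    · rintro rfl; simp
  simp only [hiff]
  by_cases hme : m (σ⁻¹ e) = 0
  · simp [hme, ite_and, mul_ite, Finset.sum_ite_eq']
  · simp [hme, ite_and]

private lemma row_recursion (σ : Equiv.Perm E) (m : E → ℤ)
    (hex : ∀ e, ∃! e', σ.SameCycle e e' ∧ m e' = 1) (h : E → ℤ) (e : E) :
    (h ᵥ* rhoMatrix σ m) e =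
      h e + (if m e = 0 then (h ᵥ* rhoMatrix σ m) (σ e) else 0) := by
  have hspec := (rho_spec σ m hex).2
  have hrho : rhoMatrix σ m = 1 + rhoMatrix σ m * brokenPermMatrix σ m := by
    rw [mul_sub, mul_one, sub_eq_iff_eq_add] at hspec
    exact hspec
  conv_lhs => rw [hrho]
  rw [Matrix.vecMul_add, Matrix.vecMul_one, ← Matrix.vecMul_vecMul]
  rw [Pi.add_apply, vecMul_broken]

private lemma col_recursion (σ : Equiv.Perm E) (m : E → ℤ)
    (hex : ∀ e, ∃! e', σ.SameCycle e e' ∧ m e' = 1) (h : E → ℤ) (e : E) :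
    (rhoMatrix σ m *ᵥ h) e =
      h e + (if m (σ⁻¹ e) = 0 then (rhoMatrix σ m *ᵥ h) (σ⁻¹ e) else 0) := by
  have hspec := (rho_spec σ m hex).1
  have hrho : rhoMatrix σ m = 1 + brokenPermMatrix σ m * rhoMatrix σ m := by
    rw [sub_mul, one_mul, sub_eq_iff_eq_add] at hspec
    exact hspec
  conv_lhs => rw [hrho]
  rw [Matrix.add_mulVec, Matrix.one_mulVec, ← Matrix.mulVec_mulVec]
  rw [Pi.add_apply, broken_mulVec]

/-- The sum of `h` over the cycle of `e` under `σ`. -/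
private def cycSum (σ : Equiv.Perm E) (e : E) (h : E → ℤ) : ℤ :=
  ∑ x ∈ Finset.univ.filter (fun x => σ.SameCycle e x), h x

private lemma cycSum_matching (σ : Equiv.Perm E) (e : E) (m : E → ℤ)
    (h01 : ∀ e, m e = 0 ∨ m e = 1)
    (hex : ∀ e, ∃! e', σ.SameCycle e e' ∧ m e' = 1) :
    cycSum σ e m = 1 := by
  obtain ⟨p, ⟨hps, hp1⟩, hpu⟩ := hex e
  have h1 : cycSum σ e m
      = ∑ x ∈ Finset.univ.filter (fun x => σ.SameCycle e x), (if m x = 1 then (1:ℤ) else 0) := by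
    refine Finset.sum_congr rfl fun x _ => ?_
    rcases h01 x with h | h <;> simp [h]
  rw [h1, ← Finset.sum_filter, Finset.filter_filter]
  have hfil : (Finset.univ.filter fun x => σ.SameCycle e x ∧ m x = 1) = {p} := by
    ext x
    simp only [Finset.mem_filter, Finset.mem_univ, true_and, Finset.mem_singleton]
    constructor
    · intro hx; exact hpu x hx
    · intro hx; rw [hx]; exact ⟨hps, hp1⟩
  rw [hfil]
  simp

private lemma marked_filter (σ : Equiv.Perm E) (m : E → ℤ) (e : E)
    (hex : ∀ e, ∃! e', σ.SameCycle e e' ∧ m e' = 1) (hme : m e = 1) :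
    ((Finset.univ.filter (fun x => σ.SameCycle e x)).filter fun x => m x = 1) = {e} := by
  obtain ⟨p, ⟨hps, hp1⟩, hpu⟩ := hex e
  have hpe : p = e := (hpu e ⟨Equiv.Perm.SameCycle.refl σ e, hme⟩).symm
  ext x
  simp only [Finset.filter_filter, Finset.mem_filter, Finset.mem_univ, true_and,
    Finset.mem_singleton]
  constructor
  · intro hx; rw [← hpe]; exact hpu x hx
  · intro hx; rw [hx]; exact ⟨Equiv.Perm.SameCycle.refl σ e, hme⟩

private lemma row_vanish (σ : Equiv.Perm E) (m : E → ℤ)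
    (h01 : ∀ e, m e = 0 ∨ m e = 1)
    (hex : ∀ e, ∃! e', σ.SameCycle e e' ∧ m e' = 1) (h : E → ℤ)
    (hc : ∀ e, cycSum σ e h = 0) (e : E) (hme : m e = 1) :
    (h ᵥ* rhoMatrix σ m) (σ e) = 0 := by
  set w := h ᵥ* rhoMatrix σ m with hw
  set C := Finset.univ.filter (fun x => σ.SameCycle e x) with hC
  have hreindex : ∑ x ∈ C, w (σ x) = ∑ x ∈ C, w x := by
    refine Finset.sum_equiv σ (fun x => ?_) (fun x _ => rfl)
    simp [hC, Equiv.Perm.sameCycle_apply_right]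
  have hterm : ∀ x ∈ C, (if m x = 1 then w (σ x) else 0) = h x + (w (σ x) - w x) := by
    intro x _
    have hr := row_recursion σ m hex h x
    rw [← hw] at hr
    rcases h01 x with h0 | h0 <;> rw [hr] <;> simp [h0]
  have key : ∑ x ∈ C, (if m x = 1 then w (σ x) else 0)
      = ∑ x ∈ C, (h x + (w (σ x) - w x)) := Finset.sum_congr rfl hterm
  have hsingle : ∑ x ∈ C, (if m x = 1 then w (σ x) else 0) = w (σ e) := by
    rw [← Finset.sum_filter, hC, marked_filter σ m e hex hme, Finset.sum_singleton]
  rw [hsingle, Finset.sum_add_distrib, Finset.sum_sub_distrib, hreindex] at key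
  have hc' : ∑ x ∈ C, h x = 0 := hc e
  rw [hc'] at key
  simpa using key

private lemma col_vanish (σ : Equiv.Perm E) (m : E → ℤ)
    (h01 : ∀ e, m e = 0 ∨ m e = 1)
    (hex : ∀ e, ∃! e', σ.SameCycle e e' ∧ m e' = 1) (h : E → ℤ)
    (hc : ∀ e, cycSum σ e h = 0) (e : E) (hme : m e = 1) :
    (rhoMatrix σ m *ᵥ h) e = 0 := by
  set u := rhoMatrix σ m *ᵥ h with hu
  set C := Finset.univ.filter (fun x => σ.SameCycle e x) with hC
  have hreindex : ∑ x ∈ C, (if m (σ⁻¹ x) = 0 then u (σ⁻¹ x) else 0)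
      = ∑ x ∈ C, (if m x = 0 then u x else 0) := by
    refine Finset.sum_equiv σ⁻¹ (fun x => ?_) (fun x _ => rfl)
    simp [hC, Equiv.Perm.sameCycle_symm_apply_right]
  have hterm : ∀ x ∈ C, u x = h x + (if m (σ⁻¹ x) = 0 then u (σ⁻¹ x) else 0) := by
    intro x _
    have hr := col_recursion σ m hex h x
    rw [← hu] at hr
    exact hr
  have key : ∑ x ∈ C, u x = ∑ x ∈ C, (h x + (if m (σ⁻¹ x) = 0 then u (σ⁻¹ x) else 0)) :=
    Finset.sum_congr rfl hterm
  have hterm2 : ∀ x ∈ C, (if m x = 0 then u x else 0) = u x - (if m x = 1 then u x else 0) := by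
    intro x _
    rcases h01 x with h0 | h0 <;> simp [h0]
  have hsingle : ∑ x ∈ C, (if m x = 1 then u x else 0) = u e := by
    rw [← Finset.sum_filter, hC, marked_filter σ m e hex hme, Finset.sum_singleton]
  have hc' : ∑ x ∈ C, h x = 0 := hc e
  rw [Finset.sum_add_distrib, hreindex, Finset.sum_congr rfl hterm2,
    Finset.sum_sub_distrib, hsingle, hc'] at key
  linarith [key]

private lemma cycSum_homology (σ σ' : Equiv.Perm E) (h : E → ℤ)
    (hh : h ∈ matchingHomology σ σ') (e : E) :
    cycSum σ e h = 0 ∧ cycSum σ' e h = 0 := by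
  have hadd : ∀ (τ : Equiv.Perm E) (f g : E → ℤ),
      cycSum τ e (f + g) = cycSum τ e f + cycSum τ e g := by
    intro τ f g
    simp [cycSum, Finset.sum_add_distrib]
  have hneg : ∀ (τ : Equiv.Perm E) (f : E → ℤ), cycSum τ e (-f) = -cycSum τ e f := by
    intro τ f
    simp [cycSum, Finset.sum_neg_distrib]
  refine AddSubgroup.closure_induction ?_ ?_ ?_ ?_ hh
  · rintro x ⟨m', m'', hm', hm'', rfl⟩
    have : ∀ τ : Equiv.Perm E, (∀ e', ∃! p, τ.SameCycle e' p ∧ m' p = 1) →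
        (∀ e', ∃! p, τ.SameCycle e' p ∧ m'' p = 1) → cycSum τ e (m' - m'') = 0 := by
      intro τ h1 h2
      have : cycSum τ e (m' - m'') = cycSum τ e m' - cycSum τ e m'' := by
        simp [cycSum, Finset.sum_sub_distrib]
      rw [this, cycSum_matching τ e m' hm'.1 h1, cycSum_matching τ e m'' hm''.1 h2, sub_self]
    exact ⟨this σ hm'.2.1 hm''.2.1, this σ' hm'.2.2 hm''.2.2⟩
  · constructor <;> simp [cycSum]
  · rintro f g - - ⟨hf1, hf2⟩ ⟨hg1, hg2⟩
    rw [hadd, hadd, hf1, hf2, hg1, hg2]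
    simp
  · rintro f - ⟨hf1, hf2⟩
    rw [hneg, hneg, hf1, hf2]
    simp

private lemma pairing_indep (σ : Equiv.Perm E) (m mh : E → ℤ)
    (hm01 : ∀ e, m e = 0 ∨ m e = 1)
    (hmex : ∀ e, ∃! e', σ.SameCycle e e' ∧ m e' = 1)
    (hmh01 : ∀ e, mh e = 0 ∨ mh e = 1)
    (hmhex : ∀ e, ∃! e', σ.SameCycle e e' ∧ mh e' = 1)
    (h₁ h₂ : E → ℤ) (hc₁ : ∀ e, cycSum σ e h₁ = 0) (hc₂ : ∀ e, cycSum σ e h₂ = 0) :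
    h₁ ⬝ᵥ (rhoMatrix σ m) *ᵥ h₂ = h₁ ⬝ᵥ (rhoMatrix σ mh) *ᵥ h₂ := by
  have h1 := (rho_spec σ m hmex).2
  have h2 := (rho_spec σ mh hmhex).1
  have hdiff : rhoMatrix σ m - rhoMatrix σ mh
      = rhoMatrix σ m * (brokenPermMatrix σ m - brokenPermMatrix σ mh) * rhoMatrix σ mh := by
    have hX : brokenPermMatrix σ m - brokenPermMatrix σ mh
        = (1 - brokenPermMatrix σ mh) - (1 - brokenPermMatrix σ m) := by abel
    rw [hX, mul_sub, sub_mul, mul_assoc, h2, mul_one, mul_assoc,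
      ← mul_assoc (rhoMatrix σ m), h1, one_mul]
  have hmain : h₁ ⬝ᵥ (rhoMatrix σ m) *ᵥ h₂ - h₁ ⬝ᵥ (rhoMatrix σ mh) *ᵥ h₂
      = (h₁ ᵥ* rhoMatrix σ m) ᵥ* (brokenPermMatrix σ m - brokenPermMatrix σ mh)
          ⬝ᵥ (rhoMatrix σ mh *ᵥ h₂) := by
    rw [← dotProduct_sub, ← Matrix.sub_mulVec, hdiff,
      ← Matrix.mulVec_mulVec, ← Matrix.mulVec_mulVec, Matrix.dotProduct_mulVec,
      Matrix.dotProduct_mulVec]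
  set w := h₁ ᵥ* rhoMatrix σ m with hw
  set u := rhoMatrix σ mh *ᵥ h₂ with hu
  have hzero : w ᵥ* (brokenPermMatrix σ m - brokenPermMatrix σ mh) ⬝ᵥ u = 0 := by
    rw [dotProduct]
    refine Finset.sum_eq_zero fun e _ => ?_
    rw [Matrix.vecMul_sub, Pi.sub_apply, vecMul_broken, vecMul_broken]
    rcases hm01 e with h0 | h0 <;> rcases hmh01 e with h0' | h0'
    · simp [h0, h0']
    · have := col_vanish σ mh hmh01 hmhex h₂ hc₂ e h0'
      rw [← hu] at this
      simp [h0, h0', this]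
    · have := row_vanish σ m hm01 hmex h₁ hc₁ e h0
      rw [← hw] at this
      simp [h0, h0', this]
    · simp [h0, h0']
  rw [hzero] at hmain
  linarith [hmain]

end Aux

/-- The form `ε₋` given by `ρ_{m,0} - ρ_{m,1}` on the subgroup `H₁` generated by
differences of perfect matchings does not depend on the chosen perfect matching `m`. -/
theorem epsMinus_independent_of_matching [Fintype E] [DecidableEq E]
    (σ₀ σ₁ : Equiv.Perm E) (m mh : E → ℤ)
    (hm : IsPerfectMatching σ₀ σ₁ m) (hmh : IsPerfectMatching σ₀ σ₁ mh)
    (h₁ h₂ : E → ℤ)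
    (hh₁ : h₁ ∈ matchingHomology σ₀ σ₁) (hh₂ : h₂ ∈ matchingHomology σ₀ σ₁) :
    h₁ ⬝ᵥ (rhoMatrix σ₀ m - rhoMatrix σ₁ m).mulVec h₂ =
      h₁ ⬝ᵥ (rhoMatrix σ₀ mh - rhoMatrix σ₁ mh).mulVec h₂ := by
  have hc₁ := cycSum_homology σ₀ σ₁ h₁ hh₁
  have hc₂ := cycSum_homology σ₀ σ₁ h₂ hh₂
  have key0 := pairing_indep σ₀ m mh hm.1 hm.2.1 hmh.1 hmh.2.1 h₁ h₂
    (fun e => (hc₁ e).1) (fun e => (hc₂ e).1)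
  have key1 := pairing_indep σ₁ m mh hm.1 hm.2.2 hmh.1 hmh.2.2 h₁ h₂
    (fun e => (hc₁ e).2) (fun e => (hc₂ e).2)
  rw [Matrix.sub_mulVec, dotProduct_sub, Matrix.sub_mulVec, dotProduct_sub,
    key0, key1]
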